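/- Let G be a graph with vertex subsets X and Y such that for every pair of distinct vertices u, v in X there exists a vertex of Y in exactly one of N[u], N[v]. Then there exists a subset C of Y with |C| <= |X| - 1 that also separates every pair of distinct vertices of X (i.e., for all distinct u, v in X, N[u] ∩ C ≠ N[v] ∩ C). -/

import Mathlib

open SimpleGraph
open Set

/-- The closed neighborhood of a vertex. -/
def cnbr {V : Type*} (G : SimpleGraph V) (v : V) : Set V := insert v (G.neighborSet v)

/-- `C` is an identifying code of `G`: every vertex is dominated by `C` and the
closed-neighborhood traces on `C` are pairwise distinct. -/
def IsIdCode {V : Type*} (G : SimpleGraph V) (C : Set V) : Prop :=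
  (∀ v, (cnbr G v ∩ C).Nonempty) ∧
  ∀ u v : V, cnbr G u ∩ C = cnbr G v ∩ C → u = v

lemma ncard_image_succ_le {α β : Type*} {s : Set α} (hs : s.Finite) (f : α → β)
    {u v : α} (hu : u ∈ s) (hv : v ∈ s) (huv : u ≠ v) (hf : f u = f v) :
    (f '' s).ncard + 1 ≤ s.ncard := by
  have himg : f '' s = f '' (s \ {u}) := by
    apply subset_antisymm _ (Set.image_mono Set.diff_subset)
    rintro _ ⟨x, hx, rfl⟩
    by_cases hxu : x = u
    · exact ⟨v, ⟨hv, by simp [huv.symm]⟩, by rw [hxu, hf]⟩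
    · exact ⟨x, ⟨hx, by simp [hxu]⟩, rfl⟩
  have h1 : (f '' s).ncard ≤ (s \ {u}).ncard := by
    rw [himg]; exact Set.ncard_image_le hs.diff
  have h2 : (s \ {u}).ncard + 1 = s.ncard := by
    rw [Set.ncard_diff_singleton_of_mem hu]
    have : 1 ≤ s.ncard := (Set.ncard_pos hs).mpr ⟨u, hu⟩
    omega
  omega

lemma aux {V : Type*} (G : SimpleGraph V) (X Y : Set V)
    (hXfin : X.Finite)
    (hsep : ∀ u ∈ X, ∀ v ∈ X, u ≠ v → cnbr G u ∩ Y ≠ cnbr G v ∩ Y) :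
    ∀ n : ℕ, ∀ C₀ : Set V, C₀ ⊆ Y → C₀.Finite →
      X.ncard - ((fun x => cnbr G x ∩ C₀) '' X).ncard ≤ n →
      ∃ C : Set V, C₀ ⊆ C ∧ C ⊆ Y ∧ C.Finite ∧
        (C \ C₀).ncard ≤ X.ncard - ((fun x => cnbr G x ∩ C₀) '' X).ncard ∧
        ∀ u ∈ X, ∀ v ∈ X, u ≠ v → cnbr G u ∩ C ≠ cnbr G v ∩ C := by
  intro n
  induction n with
  | zero =>
    intro C₀ hC₀Y hC₀fin hn
    refine ⟨C₀, subset_rfl, hC₀Y, hC₀fin, by simp, ?_⟩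
    intro u hu v hv huv heq
    have := ncard_image_succ_le hXfin (fun x => cnbr G x ∩ C₀) hu hv huv heq
    omega
  | succ n ih =>
    intro C₀ hC₀Y hC₀fin hn
    by_cases hsepC : ∀ u ∈ X, ∀ v ∈ X, u ≠ v → cnbr G u ∩ C₀ ≠ cnbr G v ∩ C₀
    · exact ⟨C₀, subset_rfl, hC₀Y, hC₀fin, by simp, hsepC⟩
    push_neg at hsepC
    obtain ⟨u, hu, v, hv, huv, heq⟩ := hsepC
    have hYne := hsep u hu v hv huv
    have hy : ∃ y, (y ∈ cnbr G u ∩ Y ∧ y ∉ cnbr G v ∩ Y) ∨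
        (y ∈ cnbr G v ∩ Y ∧ y ∉ cnbr G u ∩ Y) := by
      by_contra hcon
      push_neg at hcon
      apply hYne
      ext y
      have := hcon y
      tauto
    obtain ⟨y, hy⟩ := hy
    have hyY : y ∈ Y := by rcases hy with ⟨⟨_, h⟩, _⟩ | ⟨⟨_, h⟩, _⟩ <;> exact h
    set C₁ : Set V := insert y C₀ with hC₁def
    have hC₁Y : C₁ ⊆ Y := insert_subset hyY hC₀Y
    have hC₁fin : C₁.Finite := hC₀fin.insert y
    -- traces on C₁ differ for u, v
    have hne1 : cnbr G u ∩ C₁ ≠ cnbr G v ∩ C₁ := by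
      rcases hy with ⟨⟨hyu, _⟩, hyv⟩ | ⟨⟨hyv, _⟩, hyu⟩
      · intro h
        have : y ∈ cnbr G v ∩ C₁ := h ▸ ⟨hyu, mem_insert y C₀⟩
        exact hyv ⟨this.1, hyY⟩
      · intro h
        have : y ∈ cnbr G u ∩ C₁ := h ▸ ⟨hyv, mem_insert y C₀⟩
        exact hyu ⟨this.1, hyY⟩
    -- class count increases
    have himg0 : (fun x => cnbr G x ∩ C₀) '' X
        = (fun s => s ∩ C₀) '' ((fun x => cnbr G x ∩ C₁) '' X) := by
      rw [← Set.image_comp]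
      apply Set.image_congr
      intro x _
      simp only [Function.comp]
      rw [Set.inter_assoc, Set.inter_eq_right.mpr (subset_insert y C₀)]
    have hclass : ((fun x => cnbr G x ∩ C₀) '' X).ncard + 1
        ≤ ((fun x => cnbr G x ∩ C₁) '' X).ncard := by
      rw [himg0]
      refine ncard_image_succ_le (hXfin.image _) _
        (Set.mem_image_of_mem _ hu) (Set.mem_image_of_mem _ hv) hne1 ?_
      show cnbr G u ∩ C₁ ∩ C₀ = cnbr G v ∩ C₁ ∩ C₀
      rw [Set.inter_assoc, Set.inter_assoc,
        Set.inter_eq_right.mpr (subset_insert y C₀)]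
      exact heq
    have hclass2 : ((fun x => cnbr G x ∩ C₁) '' X).ncard ≤ X.ncard :=
      Set.ncard_image_le hXfin
    obtain ⟨C, hC₁C, hCY, hCfin, hcard, hsepC⟩ := ih C₁ hC₁Y hC₁fin (by omega)
    refine ⟨C, (subset_insert y C₀).trans hC₁C, hCY, hCfin, ?_, hsepC⟩
    have hsub : C \ C₀ ⊆ insert y (C \ C₁) := by
      intro z ⟨hz, hz0⟩
      by_cases hzy : z = y
      · rw [hzy]; exact Set.mem_insert y _
      · exact Set.mem_insert_of_mem _ ⟨hz, by simp [hC₁def, hzy, hz0]⟩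
    have := Set.ncard_le_ncard hsub (hCfin.diff.insert y)
    have := Set.ncard_insert_le y (C \ C₁)
    omega

/-- The minimum size of an identifying code of `G`. -/
noncomputable def gammaID {V : Type*} (G : SimpleGraph V) : ℕ :=
  sInf {n | ∃ C : Set V, IsIdCode G C ∧ C.ncard = n}

theorem stmt_4 {V : Type*} (G : SimpleGraph V) (X Y : Set V)
    (hXfin : X.Finite) (hXne : X.Nonempty)
    (hsep : ∀ u ∈ X, ∀ v ∈ X, u ≠ v → cnbr G u ∩ Y ≠ cnbr G v ∩ Y) :
    ∃ C ⊆ Y, C.ncard ≤ X.ncard - 1 ∧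
      ∀ u ∈ X, ∀ v ∈ X, u ≠ v → cnbr G u ∩ C ≠ cnbr G v ∩ C := by
  obtain ⟨C, _, hCY, _, hcard, hsepC⟩ :=
    aux G X Y hXfin hsep (X.ncard - 1) ∅ (Set.empty_subset Y) Set.finite_empty
      (by
        have : (fun x => cnbr G x ∩ (∅ : Set V)) '' X = {∅} := by
          rw [Set.eq_singleton_iff_nonempty_unique_mem]
          exact ⟨⟨∅, hXne.choose, hXne.choose_spec, by simp⟩, by rintro _ ⟨x, _, rfl⟩; simp⟩
        rw [this, Set.ncard_singleton])
  refine ⟨C, hCY, ?_, hsepC⟩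
  have h1 : (fun x => cnbr G x ∩ (∅ : Set V)) '' X = {∅} := by
    rw [Set.eq_singleton_iff_nonempty_unique_mem]
    exact ⟨⟨∅, hXne.choose, hXne.choose_spec, by simp⟩, by rintro _ ⟨x, _, rfl⟩; simp⟩
  rw [h1, Set.ncard_singleton] at hcard
  simpa using hcard
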